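/- Let d ≥ 1 and a_1, …, a_d, x be real numbers. Let K = Σ_{j=1}^{d} A_j where A_1 = I_2^{⊗(d-1)} ⊗ T_2(-a_1,x,a_1) and, for 2 ≤ j ≤ d, A_j = I_2^{⊗(d-j)} ⊗ T_2(-a_j,0,a_j) ⊗ J_2^{⊗(j-1)} (here T_2(-a,x,a) is the 2×2 matrix [[x,a],[-a,x]] and J_2 = [[0,1],[1,0]]). Then det K = ( x^2 + a_1^2 + a_2^2 + ⋯ + a_d^2 )^{2^{d-1}}. (This is the partition function of the monopole-dimer model on the d-dimensional hypercube Q_d with vertex weights x and edge weights a_j in the j-th direction.) -/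

import Mathlib

/-- The `k × k` tridiagonal Toeplitz matrix `T_k(-s, z, s)` with diagonal entries `z`,
superdiagonal entries `s` and subdiagonal entries `-s`. -/
noncomputable def tridiag (k : ℕ) (s z : ℂ) : Matrix (Fin k) (Fin k) ℂ :=
  Matrix.of fun i j =>
    if (i : ℕ) = (j : ℕ) then z
    else if (i : ℕ) + 1 = (j : ℕ) then s
    else if (j : ℕ) + 1 = (i : ℕ) then -s
    else 0

/-- The `k × k` anti-diagonal matrix `J_k` with all anti-diagonal entries 1. -/
noncomputable def antidiag (k : ℕ) : Matrix (Fin k) (Fin k) ℂ :=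
  Matrix.of fun i j => if (i : ℕ) + (j : ℕ) + 1 = k then 1 else 0

/-- The summand `A_j = I_{m_d} ⊗ ⋯ ⊗ I_{m_{j+1}} ⊗ T_{m_j}(-a_j, z_j, a_j) ⊗ J_{m_{j-1}}
⊗ ⋯ ⊗ J_{m_1}` (with `z_1 = x` and `z_j = 0` for `j ≥ 2`), written entrywise on the index
set `∀ i, Fin (m i)` of the grid: the Kronecker product is given by the product of the
entries of its tensor factors. Here `j : Fin d` is the `0`-based index of the factor
carrying the tridiagonal matrix. -/
noncomputable def gridSummand (d : ℕ) (m : Fin d → ℕ) (a : Fin d → ℝ) (x : ℝ) (j : Fin d) :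
    Matrix (∀ i, Fin (m i)) (∀ i, Fin (m i)) ℂ :=
  Matrix.of fun v w => ∏ i : Fin d,
    if j < i then (if v i = w i then 1 else 0)
    else if i = j then tridiag (m i) (a i) (if (i : ℕ) = 0 then (x : ℂ) else 0) (v i) (w i)
    else antidiag (m i) (v i) (w i)

/-- The generalised adjacency matrix `K = Σ_{j=1}^d A_j` of the monopole-dimer model on the
grid graph `P_{m_1} □ ⋯ □ P_{m_d}` with vertex weights `x` and edge weights `a_j`. -/
noncomputable def gridK (d : ℕ) (m : Fin d → ℕ) (a : Fin d → ℝ) (x : ℝ) :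
    Matrix (∀ i, Fin (m i)) (∀ i, Fin (m i)) ℂ :=
  ∑ j : Fin d, gridSummand d m a x j

namespace HypercubeAux

open Matrix Finset Polynomial

abbrev Mat2 := Matrix (Fin 2) (Fin 2) ℂ

/-- Entrywise Kronecker product of `d` two-by-two matrices. -/
noncomputable def bigO (d : ℕ) (f : Fin d → Mat2) :
    Matrix (Fin d → Fin 2) (Fin d → Fin 2) ℂ :=
  Matrix.of fun v w => ∏ i, f i (v i) (w i)

lemma bigO_apply (d : ℕ) (f : Fin d → Mat2) (v w : Fin d → Fin 2) :
    bigO d f v w = ∏ i, f i (v i) (w i) := rfl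

lemma bigO_mul (d : ℕ) (f g : Fin d → Mat2) :
    bigO d f * bigO d g = bigO d (fun i => f i * g i) := by
  ext v w
  rw [Matrix.mul_apply, bigO_apply]
  have : ∀ i : Fin d, (f i * g i) (v i) (w i) = ∑ t : Fin 2, f i (v i) t * g i t (w i) := by
    intro i; rw [Matrix.mul_apply]
  simp_rw [this]
  rw [Fintype.prod_sum (fun i t => f i (v i) t * g i t (w i))]
  refine Finset.sum_congr rfl fun u _ => ?_
  rw [bigO_apply, bigO_apply, ← Finset.prod_mul_distrib]

lemma prod_delta (d : ℕ) (v w : Fin d → Fin 2) :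
    (∏ i, (1 : Mat2) (v i) (w i)) = (1 : Matrix (Fin d → Fin 2) (Fin d → Fin 2) ℂ) v w := by
  rcases eq_or_ne v w with h | h
  · subst h; simp [Matrix.one_apply]
  · obtain ⟨i, hi⟩ := Function.ne_iff.mp h
    rw [Matrix.one_apply_ne h]
    exact Finset.prod_eq_zero (Finset.mem_univ i) (Matrix.one_apply_ne hi)

lemma bigO_single (d : ℕ) (j : Fin d) (c : ℂ) :
    bigO d (fun i => if i = j then c • 1 else 1) = c • 1 := by
  ext v w
  rw [bigO_apply, Matrix.smul_apply, ← prod_delta d v w, smul_eq_mul,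
    ← Finset.mul_prod_erase _ _ (Finset.mem_univ j),
    ← Finset.mul_prod_erase _ (fun i => (1 : Mat2) (v i) (w i)) (Finset.mem_univ j)]
  rw [if_pos rfl, Matrix.smul_apply, smul_eq_mul, mul_assoc]
  congr 1
  congr 1
  refine Finset.prod_congr rfl fun i hi => ?_
  rw [if_neg (Finset.ne_of_mem_erase hi)]

lemma bigO_congr_slot (d : ℕ) (j : Fin d) (f g : Fin d → Mat2) (c : ℂ)
    (hj : ∀ p q, f j p q = c * g j p q) (hi : ∀ i, i ≠ j → f i = g i) :
    bigO d f = c • bigO d g := by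
  ext v w
  rw [bigO_apply, Matrix.smul_apply, bigO_apply, smul_eq_mul,
    ← Finset.mul_prod_erase _ _ (Finset.mem_univ j),
    ← Finset.mul_prod_erase _ (fun i => g i (v i) (w i)) (Finset.mem_univ j),
    hj, mul_assoc]
  congr 2
  exact Finset.prod_congr rfl fun i hii => by rw [hi i (Finset.ne_of_mem_erase hii)]

lemma bigO_slot_add (d : ℕ) (j : Fin d) (f g h : Fin d → Mat2)
    (hj : f j = g j + h j) (hi : ∀ i, i ≠ j → f i = g i ∧ f i = h i) :
    bigO d f = bigO d g + bigO d h := by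
  ext v w
  rw [Matrix.add_apply, bigO_apply, bigO_apply, bigO_apply,
    ← Finset.mul_prod_erase _ _ (Finset.mem_univ j),
    ← Finset.mul_prod_erase _ (fun i => g i (v i) (w i)) (Finset.mem_univ j),
    ← Finset.mul_prod_erase _ (fun i => h i (v i) (w i)) (Finset.mem_univ j),
    hj, Matrix.add_apply, add_mul]
  have e1 : (∏ i ∈ Finset.univ.erase j, f i (v i) (w i))
      = ∏ i ∈ Finset.univ.erase j, g i (v i) (w i) :=
    Finset.prod_congr rfl fun i hii => by rw [(hi i (Finset.ne_of_mem_erase hii)).1]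
  have e2 : (∏ i ∈ Finset.univ.erase j, f i (v i) (w i))
      = ∏ i ∈ Finset.univ.erase j, h i (v i) (w i) :=
    Finset.prod_congr rfl fun i hii => by rw [(hi i (Finset.ne_of_mem_erase hii)).2]
  rw [← e1, ← e2]

lemma bigO_transpose (d : ℕ) (f : Fin d → Mat2) :
    (bigO d f)ᵀ = bigO d (fun i => (f i)ᵀ) := by
  ext v w
  rw [Matrix.transpose_apply, bigO_apply, bigO_apply]
  exact Finset.prod_congr rfl fun i _ => rfl

/-! ### Two-by-two computations -/

lemma T_mul_T (s : ℂ) : tridiag 2 s 0 * tridiag 2 s 0 = (-(s ^ 2)) • 1 := by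
  ext i j
  fin_cases i <;> fin_cases j <;>
    simp [tridiag, Matrix.mul_apply, Fin.sum_univ_two, Matrix.one_apply] <;> ring

lemma J_mul_J : antidiag 2 * antidiag 2 = 1 := by
  ext i j
  fin_cases i <;> fin_cases j <;>
    simp [antidiag, Matrix.mul_apply, Fin.sum_univ_two, Matrix.one_apply]

lemma T_mul_J (s : ℂ) : tridiag 2 s 0 * antidiag 2 = -(antidiag 2 * tridiag 2 s 0) := by
  ext i j
  fin_cases i <;> fin_cases j <;>
    simp [tridiag, antidiag, Matrix.mul_apply, Fin.sum_univ_two]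

lemma T_transpose (s : ℂ) : (tridiag 2 s 0)ᵀ = -(tridiag 2 s 0) := by
  ext i j
  fin_cases i <;> fin_cases j <;> simp [tridiag]

lemma J_transpose : (antidiag 2)ᵀ = antidiag 2 := by
  ext i j
  fin_cases i <;> fin_cases j <;> simp [antidiag]

lemma tridiag_split (s z : ℂ) : tridiag 2 s z = z • 1 + tridiag 2 s 0 := by
  ext i j
  fin_cases i <;> fin_cases j <;> simp [tridiag, Matrix.one_apply]

/-! ### The factors -/

/-- The `i`-th Kronecker factor of the summand `A_j`. -/
noncomputable def fac (d : ℕ) (a : Fin d → ℝ) (x : ℝ) (j i : Fin d) : Mat2 :=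
  if j < i then 1
  else if i = j then tridiag 2 (a i) (if (i : ℕ) = 0 then (x : ℂ) else 0)
  else antidiag 2

lemma summand_eq (d : ℕ) (a : Fin d → ℝ) (x : ℝ) (j : Fin d) :
    gridSummand d (fun _ => 2) a x j = bigO d (fac d a x j) := by
  ext v w
  show (∏ i : Fin d, _) = ∏ i : Fin d, _
  refine Finset.prod_congr rfl fun i _ => ?_
  unfold fac
  split_ifs <;> simp_all [Matrix.one_apply]

lemma fac_zero (d : ℕ) (a : Fin d → ℝ) (j i : Fin d) :
    fac d a 0 j i = if j < i then 1 else if i = j then tridiag 2 (a i) 0 else antidiag 2 := by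
  unfold fac
  split_ifs <;> simp

lemma fac_at_j (d : ℕ) (a : Fin d → ℝ) (j : Fin d) :
    fac d a 0 j j = tridiag 2 (a j) 0 := by
  rw [fac_zero, if_neg (lt_irrefl j), if_pos rfl]

lemma fac_gt (d : ℕ) (a : Fin d → ℝ) (x : ℝ) (j i : Fin d) (h : j < i) :
    fac d a x j i = 1 := by
  unfold fac; rw [if_pos h]

lemma fac_lt (d : ℕ) (a : Fin d → ℝ) (x : ℝ) (j i : Fin d) (h : i < j) :
    fac d a x j i = antidiag 2 := by
  unfold fac; rw [if_neg (asymm h), if_neg (ne_of_lt h)]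

/-! ### Clifford relations -/

lemma gamma_sq (d : ℕ) (a : Fin d → ℝ) (j : Fin d) :
    bigO d (fac d a 0 j) * bigO d (fac d a 0 j) = (-((a j : ℂ) ^ 2)) • 1 := by
  rw [bigO_mul]
  have hfun : (fun i => fac d a 0 j i * fac d a 0 j i)
      = fun i => if i = j then (-((a j : ℂ) ^ 2)) • 1 else 1 := by
    funext i
    rcases lt_trichotomy i j with h | h | h
    · rw [fac_lt d a 0 j i h, J_mul_J, if_neg (ne_of_lt h)]
    · subst h; rw [fac_at_j, T_mul_T, if_pos rfl]
    · rw [fac_gt d a 0 j i h, one_mul, if_neg (ne_of_gt h)]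
  rw [hfun, bigO_single]

lemma gamma_anticomm (d : ℕ) (a : Fin d → ℝ) {j k : Fin d} (hjk : j < k) :
    bigO d (fac d a 0 j) * bigO d (fac d a 0 k)
      = -(bigO d (fac d a 0 k) * bigO d (fac d a 0 j)) := by
  rw [bigO_mul, bigO_mul]
  have : bigO d (fun i => fac d a 0 j i * fac d a 0 k i)
      = (-1 : ℂ) • bigO d (fun i => fac d a 0 k i * fac d a 0 j i) := by
    refine bigO_congr_slot d j _ _ (-1) ?_ ?_
    · intro p q
      have h1 : fac d a 0 j j = tridiag 2 (a j) 0 := fac_at_j d a j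
      have h2 : fac d a 0 k j = antidiag 2 := fac_lt d a 0 k j hjk
      rw [h1, h2, T_mul_J]
      simp
    · intro i hij
      rcases lt_trichotomy i k with h | h | h
      · rcases lt_trichotomy i j with h' | h' | h'
        · rw [fac_lt d a 0 j i h', fac_lt d a 0 k i h]
        · exact absurd h' hij
        · rw [fac_gt d a 0 j i h', fac_lt d a 0 k i h, one_mul, mul_one]
      · subst h
        rw [fac_gt d a 0 j i hjk, fac_at_j, one_mul, mul_one]
      · rw [fac_gt d a 0 j i (hjk.trans h), fac_gt d a 0 k i h, one_mul]
  rw [this, neg_one_smul]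

lemma gamma_transpose (d : ℕ) (a : Fin d → ℝ) (j : Fin d) :
    (bigO d (fac d a 0 j))ᵀ = -(bigO d (fac d a 0 j)) := by
  rw [bigO_transpose]
  have : bigO d (fun i => (fac d a 0 j i)ᵀ) = (-1 : ℂ) • bigO d (fac d a 0 j) := by
    refine bigO_congr_slot d j _ _ (-1) ?_ ?_
    · intro p q
      rw [fac_at_j, T_transpose]
      simp
    · intro i hij
      rcases lt_trichotomy i j with h | h | h
      · rw [fac_lt d a 0 j i h, J_transpose]
      · exact absurd h hij
      · rw [fac_gt d a 0 j i h, Matrix.transpose_one]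
  rw [this, neg_one_smul]

end HypercubeAux

open HypercubeAux Matrix Finset Polynomial in
/-- The partition function of the monopole-dimer model on the `d`-dimensional hypercube
`Q_d` with vertex weights `x` and edge weights `a_j` in the `j`-th direction:
`det K = (x² + a_1² + ⋯ + a_d²)^{2^{d-1}}`. -/
theorem det_gridK_hypercube (d : ℕ) (hd : 1 ≤ d) (a : Fin d → ℝ) (x : ℝ) :
    (gridK d (fun _ => 2) a x).det =
      ((x ^ 2 + ∑ j : Fin d, a j ^ 2) ^ (2 ^ (d - 1)) : ℝ) := by
  classical
  set S : Matrix (Fin d → Fin 2) (Fin d → Fin 2) ℂ := gridK d (fun _ => 2) a 0 with hS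
  set r2 : ℂ := ∑ j : Fin d, (a j : ℂ) ^ 2 with hr2
  have hcard : Fintype.card (Fin d → Fin 2) = 2 ^ d := by
    simp [Fintype.card_fun]
  -- `S` as a sum of anticommuting gamma matrices
  have hSsum : S = ∑ j : Fin d, bigO d (fac d a 0 j) := by
    rw [hS]
    show (∑ j : Fin d, gridSummand d (fun _ => 2) a 0 j) = _
    exact Finset.sum_congr rfl fun j _ => summand_eq d a 0 j
  have hanti : ∀ j k : Fin d,
      bigO d (fac d a 0 j) * bigO d (fac d a 0 k)
        + bigO d (fac d a 0 k) * bigO d (fac d a 0 j)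
      = if j = k then (-(2 * (a j : ℂ) ^ 2)) • 1 else 0 := by
    intro j k
    rcases lt_trichotomy j k with h | h | h
    · rw [if_neg (ne_of_lt h), gamma_anticomm d a h]
      exact neg_add_cancel _
    · subst h
      rw [if_pos rfl, gamma_sq, ← add_smul]
      congr 1; ring
    · rw [if_neg (ne_of_gt h), gamma_anticomm d a h, add_comm]
      exact neg_add_cancel _
  -- the square of `S` is scalar
  have hS2 : S * S = (-r2) • 1 := by
    have h1 : S * S = ∑ j : Fin d, ∑ k : Fin d,
        bigO d (fac d a 0 j) * bigO d (fac d a 0 k) := by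
      rw [hSsum, Finset.sum_mul_sum]
    have h2 : S * S = ∑ j : Fin d, ∑ k : Fin d,
        bigO d (fac d a 0 k) * bigO d (fac d a 0 j) := by
      rw [h1]; exact Finset.sum_comm
    have hdouble : S * S + S * S = (-(2 * r2)) • 1 := by
      nth_rewrite 1 [h1]
      nth_rewrite 1 [h2]
      rw [← Finset.sum_add_distrib]
      have : ∀ j : Fin d, ((∑ k : Fin d, bigO d (fac d a 0 j) * bigO d (fac d a 0 k))
          + ∑ k : Fin d, bigO d (fac d a 0 k) * bigO d (fac d a 0 j))
          = (-(2 * (a j : ℂ) ^ 2)) • 1 := by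
        intro j
        rw [← Finset.sum_add_distrib]
        have := fun k => hanti j k
        rw [Finset.sum_congr rfl fun k _ => this k]
        rw [Finset.sum_ite_eq]
        simp
      rw [Finset.sum_congr rfl fun j _ => this j, ← Finset.sum_smul]
      congr 1
      rw [hr2, Finset.mul_sum, ← Finset.sum_neg_distrib]
    have h2smul : (2 : ℂ) • (S * S) = (2 : ℂ) • ((-r2) • 1) := by
      rw [two_smul, hdouble, smul_smul]
      congr 1
      ring
    exact smul_right_injective _ (two_ne_zero) h2smul
  -- `S` is antisymmetric
  have hSt : Sᵀ = -S := by
    rw [hSsum, Matrix.transpose_sum, ← Finset.sum_neg_distrib]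
    exact Finset.sum_congr rfl fun j _ => gamma_transpose d a j
  -- the matrix `K` is `x • 1 + S`
  have hKx : gridK d (fun _ => 2) a x = (x : ℂ) • 1 + S := by
    set j0 : Fin d := ⟨0, hd⟩ with hj0
    have hx0 : gridSummand d (fun _ => 2) a x j0
        = (x : ℂ) • 1 + gridSummand d (fun _ => 2) a 0 j0 := by
      rw [summand_eq, summand_eq, ← bigO_single d j0 (x : ℂ)]
      refine bigO_slot_add d j0 _ _ _ ?_ ?_
      · rw [if_pos rfl, fac_at_j]
        show fac d a x j0 j0 = _
        unfold fac
        rw [if_neg (lt_irrefl _), if_pos rfl, if_pos (show ((j0 : ℕ) = 0) from rfl),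
          tridiag_split]
      · intro i hij
        have hlt : j0 < i := by
          have : (i : ℕ) ≠ 0 := fun hc => hij (Fin.ext hc)
          exact Fin.lt_def.mpr (Nat.pos_of_ne_zero this)
        exact ⟨by rw [fac_gt d a x j0 i hlt, if_neg hij],
          by rw [fac_gt d a x j0 i hlt, fac_gt d a 0 j0 i hlt]⟩
    have hother : ∀ j : Fin d, gridSummand d (fun _ => 2) a x j
        = (if j = j0 then (x : ℂ) • 1 else 0) + gridSummand d (fun _ => 2) a 0 j := by
      intro j
      by_cases h : j = j0
      · subst h; rw [if_pos rfl]; exact hx0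
      · rw [if_neg h, zero_add, summand_eq, summand_eq]
        have hfe : fac d a x j = fac d a 0 j := by
          funext i
          unfold fac
          by_cases h1 : j < i
          · rw [if_pos h1, if_pos h1]
          · rw [if_neg h1, if_neg h1]
            by_cases h2 : i = j
            · have hne : (i : ℕ) ≠ 0 := by
                subst h2
                exact fun hc => h (Fin.ext hc)
              rw [if_pos h2, if_pos h2, if_neg hne, if_neg hne]
            · rw [if_neg h2, if_neg h2]
        rw [hfe]
    show (∑ j : Fin d, gridSummand d (fun _ => 2) a x j) = _
    rw [Finset.sum_congr rfl fun j _ => hother j, Finset.sum_add_distrib,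
      Finset.sum_ite_eq' Finset.univ j0 (fun _ => (x : ℂ) • 1), if_pos (Finset.mem_univ j0)]
    rfl
  -- determinant identities
  have hmul : ∀ z : ℂ, ((z • 1 + S) * (z • 1 - S)) = (z ^ 2 + r2) • 1 := by
    intro z
    have expand : (z • 1 + S) * (z • 1 - S)
        = (z * z) • (1 : Matrix (Fin d → Fin 2) (Fin d → Fin 2) ℂ) - S * S := by
      simp only [add_mul, mul_sub, smul_mul_assoc, mul_smul_comm, one_mul, mul_one, smul_smul]
      module
    rw [expand, hS2, ← sub_smul]
    congr 1
    ring
  have ht : ∀ z : ℂ, (z • (1 : Matrix (Fin d → Fin 2) (Fin d → Fin 2) ℂ) - S).det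
      = (z • 1 + S).det := by
    intro z
    rw [← Matrix.det_transpose (z • 1 - S), Matrix.transpose_sub, Matrix.transpose_smul,
      Matrix.transpose_one, hSt, sub_neg_eq_add]
  have hdet2 : ∀ z : ℂ,
      ((z • (1 : Matrix (Fin d → Fin 2) (Fin d → Fin 2) ℂ) + S)).det
        * ((z • 1 + S)).det = (z ^ 2 + r2) ^ (2 ^ d) := by
    intro z
    nth_rewrite 2 [← ht z]
    rw [← Matrix.det_mul, hmul z, Matrix.det_smul, Matrix.det_one, mul_one, hcard]
  -- characteristic polynomial of `-S`
  have hevalcp : ∀ z : ℂ, ((-S).charpoly.eval z) = (z • 1 + S).det := by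
    intro z
    rw [Matrix.charpoly, _root_.eval_det, Matrix.matPolyEquiv_charmatrix]
    rw [eval_sub, eval_X, eval_C, sub_neg_eq_add]
    congr 2
    rw [Matrix.scalar_apply, ← Matrix.smul_one_eq_diagonal]
  set p : Polynomial ℂ := (-S).charpoly with hp
  set q : Polynomial ℂ := ((X : Polynomial ℂ) ^ 2 + C r2) ^ (2 ^ (d - 1)) with hqdef
  have hq_eval : ∀ z : ℂ, q.eval z = (z ^ 2 + r2) ^ (2 ^ (d - 1)) := by
    intro z; rw [hqdef]; simp
  have hpow : 2 ^ (d - 1) * 2 = 2 ^ d := by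
    conv_rhs => rw [← Nat.sub_add_cancel hd]
    rw [pow_succ]
  have hp2 : p ^ 2 = q ^ 2 := by
    apply Polynomial.funext
    intro z
    rw [eval_pow, eval_pow, hevalcp z, hq_eval, sq, sq, hdet2 z, ← hpow, pow_mul, sq]
  have hq_monic : q.Monic := (Polynomial.monic_X_pow_add_C r2 two_ne_zero).pow _
  have hp_monic : p.Monic := Matrix.charpoly_monic _
  have hpq : p = q := by
    have hzero : (p - q) * (p + q) = 0 := by
      have hfac : (p - q) * (p + q) = p ^ 2 - q ^ 2 := by ring
      rw [hfac, hp2, sub_self]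
    rcases mul_eq_zero.mp hzero with h | h
    · exact sub_eq_zero.mp h
    · exfalso
      have hneg : p = -q := eq_neg_of_add_eq_zero_left h
      have h1 : p.leadingCoeff = 1 := hp_monic
      rw [hneg, leadingCoeff_neg, hq_monic.leadingCoeff] at h1
      norm_num at h1
  -- conclusion
  have hfinal : ((x : ℂ) • 1 + S).det = ((x : ℂ) ^ 2 + r2) ^ (2 ^ (d - 1)) := by
    rw [← hevalcp, hpq, hq_eval]
  rw [show (gridK d (fun _ => 2) a x).det = ((x : ℂ) • 1 + S).det from by rw [hKx],
    hfinal, hr2]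
  push_cast
  ring
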